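/- For every λ ≥ 0, e^{-λ} = (1/√π) ∫₀^∞ (e^{-u}/√u) e^{-λ²/(4u)} du. -/

import Mathlib

open Real MeasureTheory Set

lemma img_sq : (fun v : ℝ => v ^ 2) '' Ioi 0 = Ioi 0 := by
  ext x
  constructor
  · rintro ⟨v, hv, rfl⟩; exact pow_pos (show (0:ℝ) < v from hv) 2
  · intro hx; exact ⟨Real.sqrt x, Real.sqrt_pos.2 hx, Real.sq_sqrt (le_of_lt hx)⟩

lemma img_inv (c : ℝ) (hc : 0 < c) : (fun v : ℝ => c / (2 * v)) '' Ioi 0 = Ioi 0 := by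
  ext x
  simp only [mem_image, mem_Ioi]
  constructor
  · rintro ⟨v, hv, rfl⟩; exact div_pos hc (by positivity)
  · intro hx
    refine ⟨c / (2 * x), div_pos hc (by positivity), ?_⟩
    rw [eq_comm, eq_div_iff (by positivity)]
    field_simp

lemma img_main (c : ℝ) (hc : 0 < c) :
    (fun v : ℝ => v - c / (2 * v)) '' Ioi 0 = univ := by
  refine eq_univ_of_forall fun t => ?_
  have h0 : (0:ℝ) ≤ t ^ 2 + 2 * c := by positivity
  set s := Real.sqrt (t ^ 2 + 2 * c) with hsdef
  have hs : s ^ 2 = t ^ 2 + 2 * c := Real.sq_sqrt h0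
  have hs0 : 0 ≤ s := Real.sqrt_nonneg _
  have hv : 0 < (t + s) / 2 := by nlinarith [sq_nonneg (s + t), sq_nonneg (s - t)]
  refine ⟨(t + s) / 2, hv, ?_⟩
  have hts : t + s ≠ 0 := by nlinarith
  show (t + s) / 2 - c / (2 * ((t + s) / 2)) = t
  field_simp
  linear_combination hs

lemma injOn_sq' : InjOn (fun v : ℝ => v ^ 2) (Ioi 0) := by
  intro a ha b hb h
  simp only [mem_Ioi] at ha hb
  simp only at h
  nlinarith [sq_nonneg (a - b), sq_nonneg (a + b)]

lemma injOn_inv' (c : ℝ) (hc : 0 < c) : InjOn (fun v : ℝ => c / (2 * v)) (Ioi 0) := by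
  intro a ha b hb h
  simp only [mem_Ioi] at ha hb
  simp only at h
  field_simp at h
  exact h.symm

lemma injOn_main (c : ℝ) (hc : 0 < c) : InjOn (fun v : ℝ => v - c / (2 * v)) (Ioi 0) := by
  intro a ha b hb h
  simp only [mem_Ioi] at ha hb
  simp only at h
  field_simp at h
  rcases lt_trichotomy a b with h2|h2|h2 <;> nlinarith [mul_pos ha hb, mul_pos hb hc, mul_pos ha hc]

lemma deriv_sq (v : ℝ) : HasDerivAt (fun v : ℝ => v ^ 2) (2 * v) v := by
  simpa using hasDerivAt_pow 2 v

lemma hasDerivAt_cdiv (c v : ℝ) (hv : v ≠ 0) :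
    HasDerivAt (fun v : ℝ => c / (2 * v)) (-(c / (2 * v ^ 2))) v := by
  have h := (hasDerivAt_inv hv).const_mul (c / 2)
  have hfun : (fun v : ℝ => c / 2 * v⁻¹) = fun v : ℝ => c / (2 * v) := by
    funext w; rw [div_mul_eq_div_div]; ring
  rw [hfun] at h
  refine h.congr_deriv ?_
  ring

lemma hasDerivAt_main (c v : ℝ) (hv : v ≠ 0) :
    HasDerivAt (fun v : ℝ => v - c / (2 * v)) (1 + c / (2 * v ^ 2)) v := by
  have h := (hasDerivAt_id v).sub (hasDerivAt_cdiv c v hv)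
  simpa [Pi.sub_def] using h

lemma step1 (c : ℝ) :
    (∫ u in Ioi (0:ℝ), (Real.exp (-u) / Real.sqrt u) * Real.exp (-c ^ 2 / (4 * u)))
      = ∫ v in Ioi (0:ℝ), 2 * Real.exp (-(v ^ 2 + c ^ 2 / (4 * v ^ 2))) := by
  have h := integral_image_eq_integral_abs_deriv_smul measurableSet_Ioi
      (f' := fun v : ℝ => 2 * v)
      (fun x _ => (deriv_sq x).hasDerivWithinAt) injOn_sq'
      (fun u => (Real.exp (-u) / Real.sqrt u) * Real.exp (-c ^ 2 / (4 * u)))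
  rw [img_sq] at h
  rw [h]
  apply setIntegral_congr_fun measurableSet_Ioi
  intro v hv
  simp only [mem_Ioi] at hv
  have h1 : Real.sqrt (v ^ 2) = v := by rw [Real.sqrt_sq hv.le]
  simp only [smul_eq_mul]
  rw [abs_of_pos (by positivity : (0:ℝ) < 2 * v), h1,
    show -(v ^ 2 + c ^ 2 / (4 * v ^ 2)) = -(v ^ 2) + -c ^ 2 / (4 * v ^ 2) by ring,
    Real.exp_add]
  field_simp

lemma step2a (c : ℝ) (hc : 0 < c) :
    (∫ t in Ioi (0:ℝ), Real.exp (-(t - c / (2 * t)) ^ 2))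
      = ∫ v in Ioi (0:ℝ), (c / (2 * v ^ 2)) * Real.exp (-(v - c / (2 * v)) ^ 2) := by
  have h := integral_image_eq_integral_abs_deriv_smul measurableSet_Ioi
      (f' := fun v : ℝ => -(c / (2 * v ^ 2)))
      (fun x hx => (hasDerivAt_cdiv c x (ne_of_gt hx)).hasDerivWithinAt) (injOn_inv' c hc)
      (fun t => Real.exp (-(t - c / (2 * t)) ^ 2))
  rw [img_inv c hc] at h
  rw [h]
  apply setIntegral_congr_fun measurableSet_Ioi
  intro v hv
  simp only [mem_Ioi] at hv
  have h1 : c / (2 * (c / (2 * v))) = v := by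
    rw [eq_comm, eq_div_iff (by positivity)]; field_simp
  simp only [smul_eq_mul]
  rw [abs_neg, abs_of_pos (by positivity : (0:ℝ) < c / (2 * v ^ 2)), h1,
    show c / (2 * v) - v = -(v - c / (2 * v)) by ring, neg_sq]

lemma step2b (c : ℝ) (hc : 0 < c) :
    Real.sqrt π
      = ∫ v in Ioi (0:ℝ), (1 + c / (2 * v ^ 2)) * Real.exp (-(v - c / (2 * v)) ^ 2) := by
  have h := integral_image_eq_integral_abs_deriv_smul measurableSet_Ioi
      (f' := fun v : ℝ => 1 + c / (2 * v ^ 2))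
      (fun x hx => (hasDerivAt_main c x (ne_of_gt hx)).hasDerivWithinAt) (injOn_main c hc)
      (fun t => Real.exp (-t ^ 2))
  rw [img_main c hc] at h
  rw [Measure.restrict_univ] at h
  have hg : (∫ t : ℝ, Real.exp (-t ^ 2)) = Real.sqrt π := by
    simpa using integral_gaussian 1
  rw [← hg, h]
  apply setIntegral_congr_fun measurableSet_Ioi
  intro v hv
  simp only [mem_Ioi] at hv
  simp only [smul_eq_mul]
  rw [abs_of_pos (by positivity : (0:ℝ) < 1 + c / (2 * v ^ 2))]

lemma g_meas (c : ℝ) : Measurable (fun v : ℝ => Real.exp (-(v - c / (2 * v)) ^ 2)) := by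
  fun_prop

lemma intK (c : ℝ) (hc : 0 < c) :
    IntegrableOn (fun v : ℝ => Real.exp (-(v - c / (2 * v)) ^ 2)) (Ioi 0) := by
  have hbound : Integrable (fun v : ℝ => Real.exp c * Real.exp (-v ^ 2))
      (volume.restrict (Ioi 0)) := by
    refine Integrable.restrict ?_
    have := (integrable_exp_neg_mul_sq (one_pos)).const_mul (Real.exp c)
    simpa using this
  refine Integrable.mono' hbound ((g_meas c).aestronglyMeasurable) ?_
  filter_upwards [ae_restrict_mem measurableSet_Ioi] with v hv
  simp only [mem_Ioi] at hv
  rw [Real.norm_eq_abs, abs_of_pos (Real.exp_pos _), ← Real.exp_add]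
  apply Real.exp_le_exp.2
  have hsq : (v - c / (2 * v)) ^ 2 = v ^ 2 - c + c ^ 2 / (4 * v ^ 2) := by
    field_simp; ring
  have : 0 ≤ c ^ 2 / (4 * v ^ 2) := by positivity
  nlinarith

lemma intK2 (c : ℝ) (hc : 0 < c) :
    IntegrableOn
      (fun v : ℝ => (c / (2 * v ^ 2)) * Real.exp (-(v - c / (2 * v)) ^ 2)) (Ioi 0) := by
  have h := integrableOn_image_iff_integrableOn_abs_deriv_smul measurableSet_Ioi
      (f' := fun v : ℝ => -(c / (2 * v ^ 2)))
      (fun x hx => (hasDerivAt_cdiv c x (ne_of_gt hx)).hasDerivWithinAt) (injOn_inv' c hc)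
      (fun t => Real.exp (-(t - c / (2 * t)) ^ 2))
  rw [img_inv c hc] at h
  have h2 := h.1 (intK c hc)
  refine h2.congr_fun ?_ measurableSet_Ioi
  intro v hv
  simp only [mem_Ioi] at hv
  have h1 : c / (2 * (c / (2 * v))) = v := by
    rw [eq_comm, eq_div_iff (by positivity)]; field_simp
  simp only [smul_eq_mul]
  rw [abs_neg, abs_of_pos (by positivity : (0:ℝ) < c / (2 * v ^ 2)), h1,
    show c / (2 * v) - v = -(v - c / (2 * v)) by ring, neg_sq]

lemma Kval (c : ℝ) (hc : 0 < c) :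
    (∫ t in Ioi (0:ℝ), Real.exp (-(t - c / (2 * t)) ^ 2)) = Real.sqrt π / 2 := by
  have hsplit :
      (∫ v in Ioi (0:ℝ), (1 + c / (2 * v ^ 2)) * Real.exp (-(v - c / (2 * v)) ^ 2))
        = (∫ v in Ioi (0:ℝ), Real.exp (-(v - c / (2 * v)) ^ 2))
          + ∫ v in Ioi (0:ℝ), (c / (2 * v ^ 2)) * Real.exp (-(v - c / (2 * v)) ^ 2) := by
    rw [← integral_add (intK c hc) (intK2 c hc)]
    apply setIntegral_congr_fun measurableSet_Ioi
    intro v _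
    ring
  have h := step2b c hc
  rw [hsplit, ← step2a c hc] at h
  linarith

/-- Bochner's subordination formula. -/
theorem bochner_subordination (lam : ℝ) (hlam : 0 ≤ lam) :
    Real.exp (-lam) =
      (1 / Real.sqrt π) *
        ∫ u in Set.Ioi (0 : ℝ),
          (Real.exp (-u) / Real.sqrt u) * Real.exp (-lam ^ 2 / (4 * u)) := by
  have hpi : Real.sqrt π ≠ 0 := by
    positivity
  rcases eq_or_lt_of_le hlam with rfl | hc
  · have h1 : (∫ u in Ioi (0:ℝ),
        (Real.exp (-u) / Real.sqrt u) * Real.exp (-(0:ℝ) ^ 2 / (4 * u)))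
        = ∫ u in Ioi (0:ℝ), Real.exp (-u) * u ^ ((1:ℝ)/2 - 1) := by
      apply setIntegral_congr_fun measurableSet_Ioi
      intro u hu
      simp only [mem_Ioi] at hu
      simp only
      rw [show -(0:ℝ) ^ 2 / (4 * u) = 0 by ring, Real.exp_zero, mul_one,
        show ((1:ℝ)/2 - 1) = -(1/2) by norm_num, Real.rpow_neg hu.le,
        Real.sqrt_eq_rpow, div_eq_mul_inv]
    rw [h1, ← Real.Gamma_eq_integral (by norm_num : (0:ℝ) < 1/2), Real.Gamma_one_half_eq]
    field_simp
    simp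
  · rw [step1 lam]
    have heq : EqOn (fun v : ℝ => 2 * Real.exp (-(v ^ 2 + lam ^ 2 / (4 * v ^ 2))))
        (fun v : ℝ => (2 * Real.exp (-lam)) * Real.exp (-(v - lam / (2 * v)) ^ 2))
        (Ioi 0) := by
      intro v hv
      simp only [mem_Ioi] at hv
      simp only
      rw [mul_assoc, ← Real.exp_add]
      congr 1
      field_simp
      ring
    rw [setIntegral_congr_fun measurableSet_Ioi heq, MeasureTheory.integral_const_mul, Kval lam hc]
    field_simp
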